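/- Let a > 0 and let f ∈ D^a be an even function. Then J_a(I_a(f)) = f, where I_a(f)(s) = sign(s)[s^{-1}(1-s²)^a f(s) + 2a∫_{-sign(s)}^s f(t)(1-t²)^{a-1}dt] and J_a(u)(s) = -|s|u(1)/2 + |s|(1-s²)^{-a}u(s) - 2a|s|∫₀^s t(1-t²)^{-(a+1)}u(t)dt for s ≠ 0. -/
import Mathlib


open Filter Topology MeasureTheory

noncomputable def DaInt (a : ℝ) (f : ℝ → ℝ) (s : ℝ) : ℝ :=
  ∫ t in (0:ℝ)..s, (1 - t ^ 2) ^ (a - 1) * f t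

noncomputable def DaLim (a : ℝ) (f : ℝ → ℝ) (e : ℝ) : ℝ :=
  limUnder (𝓝[Set.Ioo (-1:ℝ) 1] e) (DaInt a f)

def MemDa (a : ℝ) (f : ℝ → ℝ) : Prop :=
  ContinuousOn f (Set.Ioo (-1:ℝ) 1) ∧
  Tendsto (fun s => (1 - s ^ 2) ^ a * f s) (𝓝[Set.Ioo (-1:ℝ) 1] 1) (𝓝 0) ∧
  Tendsto (fun s => (1 - s ^ 2) ^ a * f s) (𝓝[Set.Ioo (-1:ℝ) 1] (-1)) (𝓝 0) ∧
  (∃ L : ℝ, Tendsto (DaInt a f) (𝓝[Set.Ioo (-1:ℝ) 1] 1) (𝓝 L)) ∧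
  (∃ L : ℝ, Tendsto (DaInt a f) (𝓝[Set.Ioo (-1:ℝ) 1] (-1)) (𝓝 L))

noncomputable def DaNorm (a : ℝ) (f : ℝ → ℝ) : ℝ :=
  (⨆ s : Set.Ioo (-1:ℝ) 1, (1 - (s:ℝ) ^ 2) ^ a * |f (s:ℝ)|) +
    ⨆ s : Set.Ioo (-1:ℝ) 1, |DaInt a f (s:ℝ)|

/-- The (possibly improper) integral `∫_0^s f(t)(1-t^2)^(a-1) dt`, where for `s = ±1`
it is interpreted as the improper limit. -/
noncomputable def DaIntE (a : ℝ) (f : ℝ → ℝ) (s : ℝ) : ℝ :=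
  if s ∈ Set.Ioo (-1:ℝ) 1 then DaInt a f s else DaLim a f s

/-- `I_a(f)(s) = sign s * (s⁻¹ (1-s²)^a f(s) + 2a ∫_{-sign s}^s f(t)(1-t²)^(a-1) dt)`. -/
noncomputable def Ia (a : ℝ) (f : ℝ → ℝ) (s : ℝ) : ℝ :=
  Real.sign s *
    (s⁻¹ * (1 - s ^ 2) ^ a * f s + 2 * a * (DaIntE a f s - DaIntE a f (-Real.sign s)))

/-- `J_a(u)(s) = -|s|u(1)/2 + |s|(1-s²)^{-a}u(s) - 2a|s| ∫_0^s t(1-t²)^{-(a+1)}u(t) dt`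
for `s ≠ 0`, and `J_a(u)(0) = lim_{t→0} |t|u(t)`. -/
noncomputable def Ja (a : ℝ) (u : ℝ → ℝ) (s : ℝ) : ℝ :=
  if s = 0 then limUnder (𝓝[≠] (0:ℝ)) (fun t => |t| * u t)
  else |s| * (-u 1 / 2) + |s| * (1 - s ^ 2) ^ (-a) * u s -
    2 * a * |s| * ∫ t in (0:ℝ)..s, t * (1 - t ^ 2) ^ (-(a + 1)) * u t

def MemC (u : ℝ → ℝ) : Prop :=
  ContinuousOn u (Set.Icc (-1:ℝ) 1 \ {0}) ∧ u 1 = u (-1) ∧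
  ∃ L : ℝ, Tendsto (fun s => |s| * u s) (𝓝[Set.Icc (-1:ℝ) 1 \ {0}] 0) (𝓝 L)

noncomputable def CNorm (u : ℝ → ℝ) : ℝ :=
  ⨆ s : (Set.Icc (-1:ℝ) 1 \ {0} : Set ℝ), |(s:ℝ)| * |u (s:ℝ)|

/- ### Auxiliary lemmas -/

lemma mem_Ioo_of_uIcc {s t : ℝ} (hs : s ∈ Set.Ioo (-1:ℝ) 1) (ht : t ∈ Set.uIcc 0 s) :
    t ∈ Set.Ioo (-1:ℝ) 1 :=
  Set.ordConnected_Ioo.uIcc_subset (by norm_num) hs ht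

lemma one_sub_sq_pos {t : ℝ} (ht : t ∈ Set.Ioo (-1:ℝ) 1) : (0:ℝ) < 1 - t ^ 2 := by
  nlinarith [ht.1, ht.2]

lemma daInt_hasDerivAt {a : ℝ} {f : ℝ → ℝ} (hfc : ContinuousOn f (Set.Ioo (-1:ℝ) 1))
    {t : ℝ} (ht : t ∈ Set.Ioo (-1:ℝ) 1) :
    HasDerivAt (DaInt a f) ((1 - t ^ 2) ^ (a - 1) * f t) t := by
  have hgc : ContinuousOn (fun t : ℝ => (1 - t ^ 2) ^ (a - 1) * f t) (Set.Ioo (-1:ℝ) 1) := by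
    apply ContinuousOn.mul _ hfc
    apply ContinuousOn.rpow_const (by fun_prop)
    intro x hx
    exact Or.inl (one_sub_sq_pos hx).ne'
  exact intervalIntegral.integral_hasDerivAt_right
    ((hgc.mono (Set.ordConnected_Ioo.uIcc_subset (by norm_num) ht)).intervalIntegrable)
    (ContinuousOn.stronglyMeasurableAtFilter isOpen_Ioo hgc t ht)
    (hgc.continuousAt (isOpen_Ioo.mem_nhds ht))

lemma daInt_neg {a : ℝ} {f : ℝ → ℝ}
    (heven : ∀ s ∈ Set.Ioo (-1:ℝ) 1, f (-s) = f s) {s : ℝ}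
    (hs : s ∈ Set.Ioo (-1:ℝ) 1) : DaInt a f (-s) = -DaInt a f s := by
  have h2 : Set.EqOn (fun t : ℝ => (1 - (-t) ^ 2) ^ (a - 1) * f (-t))
      (fun t : ℝ => (1 - t ^ 2) ^ (a - 1) * f t) (Set.uIcc 0 s) := by
    intro t ht
    simp only [neg_sq]
    rw [heven t (mem_Ioo_of_uIcc hs ht)]
  have h1 := intervalIntegral.integral_comp_neg (a := 0) (b := s)
    (fun t : ℝ => (1 - t ^ 2) ^ (a - 1) * f t)
  simp only [neg_zero] at h1
  have h4 : DaInt a f (-s) = -∫ x in (-s)..(0:ℝ), (1 - x ^ 2) ^ (a - 1) * f x := by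
    rw [DaInt, intervalIntegral.integral_symm]
  rw [h4, ← h1, intervalIntegral.integral_congr h2]
  rfl

lemma key_integral {a : ℝ} {f : ℝ → ℝ} (hfc : ContinuousOn f (Set.Ioo (-1:ℝ) 1))
    (c L : ℝ) {s : ℝ} (hs : s ∈ Set.Ioo (-1:ℝ) 1) :
    (∫ t in (0:ℝ)..s, (c * (1 - t ^ 2) ^ (-(1:ℝ)) * f t
        + 2 * a * t * (1 - t ^ 2) ^ (-(a + 1)) * (c * DaInt a f t + L)))
      = (1 - s ^ 2) ^ (-a) * (c * DaInt a f s + L) - L := by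
  have huIcc : Set.uIcc (0:ℝ) s ⊆ Set.Ioo (-1:ℝ) 1 :=
    Set.ordConnected_Ioo.uIcc_subset (by norm_num) hs
  have hcont : ∀ t ∈ Set.Ioo (-1:ℝ) 1, ContinuousAt (fun t : ℝ =>
      c * (1 - t ^ 2) ^ (-(1:ℝ)) * f t
        + 2 * a * t * (1 - t ^ 2) ^ (-(a + 1)) * (c * DaInt a f t + L)) t := by
    intro t ht
    have hp := one_sub_sq_pos ht
    have c1 : ContinuousAt (fun t : ℝ => 1 - t ^ 2) t := by fun_prop
    have c2 : ContinuousAt (fun t : ℝ => (1 - t ^ 2) ^ (-(1:ℝ))) t :=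
      c1.rpow_const (Or.inl hp.ne')
    have c3 : ContinuousAt (fun t : ℝ => (1 - t ^ 2) ^ (-(a + 1))) t :=
      c1.rpow_const (Or.inl hp.ne')
    have c4 : ContinuousAt f t := hfc.continuousAt (isOpen_Ioo.mem_nhds ht)
    have c5 : ContinuousAt (DaInt a f) t := (daInt_hasDerivAt hfc ht).continuousAt
    exact ((continuousAt_const.mul c2).mul c4).add
      ((((continuousAt_const.mul continuousAt_id).mul c3)).mul
        ((continuousAt_const.mul c5).add continuousAt_const))
  have hderiv : ∀ t ∈ Set.uIcc (0:ℝ) s,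
      HasDerivAt (fun t : ℝ => (1 - t ^ 2) ^ (-a) * (c * DaInt a f t + L))
        (c * (1 - t ^ 2) ^ (-(1:ℝ)) * f t
          + 2 * a * t * (1 - t ^ 2) ^ (-(a + 1)) * (c * DaInt a f t + L)) t := by
    intro t ht'
    have ht := huIcc ht'
    have hp := one_sub_sq_pos ht
    have dbase : HasDerivAt (fun t : ℝ => 1 - t ^ 2) (-(2 * t)) t := by
      simpa using ((hasDerivAt_pow 2 t).const_sub 1)
    have d1 : HasDerivAt (fun t : ℝ => (1 - t ^ 2) ^ (-a))
        ((-(2 * t)) * (-a) * (1 - t ^ 2) ^ (-a - 1)) t :=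
      dbase.rpow_const (Or.inl hp.ne')
    have d2 : HasDerivAt (fun t : ℝ => c * DaInt a f t + L)
        (c * ((1 - t ^ 2) ^ (a - 1) * f t)) t :=
      ((daInt_hasDerivAt hfc ht).const_mul c).add_const L
    have hmul := d1.mul d2
    have e1 : (1 - t ^ 2) ^ (-(1:ℝ)) = (1 - t ^ 2) ^ (-a) * (1 - t ^ 2) ^ (a - 1) := by
      rw [← Real.rpow_add hp]; congr 1; ring
    have e2 : (1 - t ^ 2) ^ (-(a + 1)) = (1 - t ^ 2) ^ (-a - 1) := by
      congr 1; ring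
    have heq : c * (1 - t ^ 2) ^ (-(1:ℝ)) * f t
          + 2 * a * t * (1 - t ^ 2) ^ (-(a + 1)) * (c * DaInt a f t + L)
        = (-(2 * t)) * (-a) * (1 - t ^ 2) ^ (-a - 1) * (c * DaInt a f t + L)
          + (1 - t ^ 2) ^ (-a) * (c * ((1 - t ^ 2) ^ (a - 1) * f t)) := by
      rw [e1, e2]; ring
    rw [heq]
    exact hmul
  have hint : IntervalIntegrable (fun t : ℝ =>
      c * (1 - t ^ 2) ^ (-(1:ℝ)) * f t
        + 2 * a * t * (1 - t ^ 2) ^ (-(a + 1)) * (c * DaInt a f t + L)) volume 0 s := by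
    apply ContinuousOn.intervalIntegrable
    exact fun t ht => (hcont t (huIcc ht)).continuousWithinAt
  rw [intervalIntegral.integral_eq_sub_of_hasDerivAt hderiv hint]
  have h0 : DaInt a f 0 = 0 := intervalIntegral.integral_same
  rw [h0]
  norm_num [Real.one_rpow]

/-- For even `f ∈ D^a`, `J_a(I_a(f)) = f` on `(-1,1)`. -/
theorem Ja_Ia_even (a : ℝ) (ha : 0 < a) (f : ℝ → ℝ) (hf : MemDa a f)
    (heven : ∀ s ∈ Set.Ioo (-1:ℝ) 1, f (-s) = f s) :
    ∀ s ∈ Set.Ioo (-1:ℝ) 1, Ja a (Ia a f) s = f s := by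
  obtain ⟨hfc, -, -, ⟨L, hL⟩, ⟨M, hM⟩⟩ := hf
  have h01 : (0:ℝ) ∈ Set.Ioo (-1:ℝ) 1 := by norm_num
  haveI hnb1 : (𝓝[Set.Ioo (-1:ℝ) 1] (1:ℝ)).NeBot := by
    rw [← mem_closure_iff_nhdsWithin_neBot, closure_Ioo (by norm_num : (-1:ℝ) ≠ 1)]
    norm_num
  haveI hnbm1 : (𝓝[Set.Ioo (-1:ℝ) 1] (-1:ℝ)).NeBot := by
    rw [← mem_closure_iff_nhdsWithin_neBot, closure_Ioo (by norm_num : (-1:ℝ) ≠ 1)]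
    norm_num
  have hneg : Tendsto (fun x : ℝ => -x) (𝓝[Set.Ioo (-1:ℝ) 1] (1:ℝ))
      (𝓝[Set.Ioo (-1:ℝ) 1] (-1:ℝ)) := by
    have hc : ContinuousWithinAt (fun x : ℝ => -x) (Set.Ioo (-1:ℝ) 1) 1 :=
      continuous_neg.continuousWithinAt
    have hmaps : Set.MapsTo (fun x : ℝ => -x) (Set.Ioo (-1:ℝ) 1) (Set.Ioo (-1:ℝ) 1) := by
      intro x hx
      obtain ⟨h1, h2⟩ := hx
      simp only [Set.mem_Ioo]
      constructor <;> linarith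
    have := hc.tendsto_nhdsWithin hmaps
    simpa using this
  have hML : M = -L := by
    have t1 : Tendsto (fun x => DaInt a f (-x)) (𝓝[Set.Ioo (-1:ℝ) 1] (1:ℝ)) (𝓝 M) :=
      hM.comp hneg
    have t2 : Tendsto (fun x => -DaInt a f x) (𝓝[Set.Ioo (-1:ℝ) 1] (1:ℝ)) (𝓝 M) := by
      apply t1.congr'
      filter_upwards [self_mem_nhdsWithin] with x hx
      exact daInt_neg heven hx
    have t3 : Tendsto (DaInt a f) (𝓝[Set.Ioo (-1:ℝ) 1] (1:ℝ)) (𝓝 (-M)) := by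
      simpa using t2.neg
    have := tendsto_nhds_unique hL t3
    linarith
  have hE1 : DaIntE a f 1 = L := by
    rw [DaIntE, if_neg (by norm_num), DaLim, hL.limUnder_eq]
  have hEm1 : DaIntE a f (-1) = -L := by
    rw [DaIntE, if_neg (by norm_num), DaLim]
    rw [hML] at hM
    exact hM.limUnder_eq
  have hu : ∀ t ∈ Set.Ioo (-1:ℝ) 1, t ≠ 0 →
      Ia a f t = |t|⁻¹ * (1 - t ^ 2) ^ a * f t
        + 2 * a * (Real.sign t * DaInt a f t + L) := by
    intro t ht ht0
    rcases ht0.lt_or_gt with h | h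
    · rw [Ia, Real.sign_of_neg h, show -(-1:ℝ) = 1 by norm_num, hE1, DaIntE, if_pos ht,
        abs_of_neg h]
      ring
    · rw [Ia, Real.sign_of_pos h, show -(1:ℝ) = -1 by norm_num, hEm1, DaIntE, if_pos ht,
        abs_of_pos h]
      ring
  intro s hs
  by_cases hs0 : s = 0
  · subst hs0
    have heq : (fun t : ℝ => |t| * Ia a f t) =ᶠ[𝓝[≠] (0:ℝ)]
        (fun t : ℝ => (1 - t ^ 2) ^ a * f t + 2 * a * (t * DaInt a f t + L * |t|)) := by
      have hmem : Set.Ioo (-1:ℝ) 1 ∈ 𝓝[≠] (0:ℝ) :=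
        nhdsWithin_le_nhds (isOpen_Ioo.mem_nhds h01)
      filter_upwards [hmem, self_mem_nhdsWithin] with t htI ht0
      rw [hu t htI ht0]
      have hinv : |t| * |t|⁻¹ = 1 := mul_inv_cancel₀ (abs_ne_zero.mpr ht0)
      have hsgnabs : |t| * Real.sign t = t := by
        rcases lt_trichotomy t 0 with h | h | h
        · rw [Real.sign_of_neg h, abs_of_neg h]; ring
        · simp [h]
        · rw [Real.sign_of_pos h, abs_of_pos h]; ring
      linear_combination ((1 - t ^ 2) ^ a * f t) * hinv + 2 * a * DaInt a f t * hsgnabs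
    have hlim : Tendsto (fun t : ℝ => (1 - t ^ 2) ^ a * f t
        + 2 * a * (t * DaInt a f t + L * |t|)) (𝓝 0) (𝓝 (f 0)) := by
      have c1 : ContinuousAt (fun t : ℝ => (1 - t ^ 2) ^ a) 0 :=
        ContinuousAt.rpow_const (by fun_prop) (Or.inl (by norm_num))
      have c4 : ContinuousAt f 0 := hfc.continuousAt (isOpen_Ioo.mem_nhds h01)
      have c5 : ContinuousAt (DaInt a f) 0 := (daInt_hasDerivAt hfc h01).continuousAt
      have call : ContinuousAt (fun t : ℝ => (1 - t ^ 2) ^ a * f t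
          + 2 * a * (t * DaInt a f t + L * |t|)) 0 :=
        (c1.mul c4).add (continuousAt_const.mul
          ((continuousAt_id.mul c5).add (continuousAt_const.mul continuous_abs.continuousAt)))
      have := call.tendsto
      simpa [Real.one_rpow] using this
    have htend : Tendsto (fun t => |t| * Ia a f t) (𝓝[≠] (0:ℝ)) (𝓝 (f 0)) :=
      Tendsto.congr' heq.symm (hlim.mono_left nhdsWithin_le_nhds)
    rw [Ja, if_pos rfl, htend.limUnder_eq]
  · set c := Real.sign s with hcdef
    have hsgn : ∀ t ∈ Set.uIoc (0:ℝ) s, t ≠ 0 → Real.sign t = c := by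
      intro t htm ht0
      rcases Set.mem_uIoc.mp htm with ⟨h1, h2⟩ | ⟨h1, h2⟩
      · rw [hcdef, Real.sign_of_pos h1, Real.sign_of_pos (lt_of_lt_of_le h1 h2)]
      · have htn : t < 0 := lt_of_le_of_ne h2 ht0
        rw [hcdef, Real.sign_of_neg htn, Real.sign_of_neg (h1.trans htn)]
    have huIcc : Set.uIcc (0:ℝ) s ⊆ Set.Ioo (-1:ℝ) 1 :=
      Set.ordConnected_Ioo.uIcc_subset h01 hs
    have hIeq : (∫ t in (0:ℝ)..s, t * (1 - t ^ 2) ^ (-(a + 1)) * Ia a f t)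
        = ∫ t in (0:ℝ)..s, (c * (1 - t ^ 2) ^ (-(1:ℝ)) * f t
            + 2 * a * t * (1 - t ^ 2) ^ (-(a + 1)) * (c * DaInt a f t + L)) := by
      apply intervalIntegral.integral_congr_ae
      have h0 : ∀ᵐ t : ℝ ∂volume, t ≠ 0 := by
        have hv : (volume : Measure ℝ) {0} = 0 := Real.volume_singleton
        rw [ae_iff]
        simp only [ne_eq, not_not, Set.setOf_eq_eq_singleton]
        exact hv
      filter_upwards [h0] with t ht0 htm
      have htI : t ∈ Set.Ioo (-1:ℝ) 1 := huIcc (Set.uIoc_subset_uIcc htm)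
      rw [hu t htI ht0, hsgn t htm ht0]
      have habs_t : t * |t|⁻¹ = c := by
        rw [← hsgn t htm ht0]
        rcases ht0.lt_or_gt with h | h
        · rw [abs_of_neg h, Real.sign_of_neg h]
          field_simp
        · rw [abs_of_pos h, Real.sign_of_pos h]
          field_simp
      have erpow : (1 - t ^ 2) ^ (-(a + 1)) * (1 - t ^ 2) ^ a = (1 - t ^ 2) ^ (-(1:ℝ)) := by
        rw [← Real.rpow_add (one_sub_sq_pos htI)]; congr 1; ring
      calc t * (1 - t ^ 2) ^ (-(a + 1))
            * (|t|⁻¹ * (1 - t ^ 2) ^ a * f t + 2 * a * (c * DaInt a f t + L))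
          = (t * |t|⁻¹) * ((1 - t ^ 2) ^ (-(a + 1)) * (1 - t ^ 2) ^ a) * f t
            + 2 * a * t * (1 - t ^ 2) ^ (-(a + 1)) * (c * DaInt a f t + L) := by ring
        _ = c * (1 - t ^ 2) ^ (-(1:ℝ)) * f t
            + 2 * a * t * (1 - t ^ 2) ^ (-(a + 1)) * (c * DaInt a f t + L) := by
            rw [habs_t, erpow]
    have hu1 : Ia a f 1 = 4 * a * L := by
      rw [Ia, Real.sign_one, show -(1:ℝ) = -1 by norm_num, hEm1, hE1]
      rw [show (1:ℝ) - 1 ^ 2 = 0 by norm_num, Real.zero_rpow ha.ne']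
      ring
    rw [Ja, if_neg hs0, hIeq, key_integral hfc c L hs, hu1, hu s hs hs0]
    have hinv : |s| * |s|⁻¹ = 1 := mul_inv_cancel₀ (abs_ne_zero.mpr hs0)
    have h2 : (1 - s ^ 2) ^ (-a) * (1 - s ^ 2) ^ a = 1 := by
      rw [← Real.rpow_add (one_sub_sq_pos hs)]
      norm_num
    linear_combination ((1 - s ^ 2) ^ (-a) * (1 - s ^ 2) ^ a * f s) * hinv + f s * h2
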